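/- Assume the standing assumptions. Let λ ∈ ℂ with λ ∉ {a, −a, b, −b} and let ψ ∈ H with ψ ≠ 0 satisfy Uψ = λψ. Set f := dψ. Then ψ = ((a − b)/(λ² − b²))·(b·(d*f) + λ·S(d*f)), and f is orthogonal to ker(T² − I), i.e. ⟨f, g⟩ = 0 for every g ∈ K with T(Tg) = g. -/

import Mathlib

open ContinuousLinearMap

/-- Under the standing assumptions, if `Uψ = λψ` with `ψ ≠ 0` and
`λ ∉ {a, −a, b, −b}`, then with `f := dψ` we have
`ψ = ((a−b)/(λ²−b²))·(b·(d*f) + λ·S(d*f))` and `f ⊥ ker(T²−I)`. -/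
theorem stmt_13 {H K : Type*}
    [NormedAddCommGroup H] [InnerProductSpace ℂ H] [CompleteSpace H] [Nontrivial H]
    [NormedAddCommGroup K] [InnerProductSpace ℂ K] [CompleteSpace K] [Nontrivial K]
    (a b : ℝ)
    (d : H →L[ℂ] K) (hd : d ∘L (adjoint d) = 1)
    (S : H →L[ℂ] H) (hS : IsSelfAdjoint S) (hS2 : S ∘L S = 1)
    (C : H →L[ℂ] H)
    (hC : C = (a : ℂ) • ((adjoint d) ∘L d) + (b : ℂ) • (1 - (adjoint d) ∘L d))
    (U : H →L[ℂ] H) (hU : U = S ∘L C)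
    (T : K →L[ℂ] K) (hT : T = d ∘L S ∘L (adjoint d))
    (h1 : (adjoint d) ∘L d ≠ 1) (h2 : S ≠ 1) (h3 : S ≠ -1)
    (h4 : a ≠ b) (h5 : a ≠ -b) (h6 : a * b ≠ 0)
    (lam : ℂ) (hlam : lam ∉ ({(a : ℂ), -(a : ℂ), (b : ℂ), -(b : ℂ)} : Set ℂ))
    (ψ : H) (hψ0 : ψ ≠ 0) (hψ : U ψ = lam • ψ) :
    ψ = (((a : ℂ) - (b : ℝ)) / (lam ^ 2 - (b : ℂ) ^ 2)) •
        ((b : ℂ) • ((adjoint d) (d ψ)) + lam • S ((adjoint d) (d ψ))) ∧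
    ∀ g : K, T (T g) = g → (inner ℂ (d ψ) g : ℂ) = 0 := by
  have hla : lam ≠ (a:ℂ) := fun h => hlam (by simp [h])
  have hlna : lam ≠ -(a:ℂ) := fun h => hlam (by simp [h])
  have hlb : lam ≠ (b:ℂ) := fun h => hlam (by simp [h])
  have hlnb : lam ≠ -(b:ℂ) := fun h => hlam (by simp [h])
  have hdd : ∀ x : K, d (adjoint d x) = x := fun x => by
    have := ContinuousLinearMap.ext_iff.mp hd x; simpa using this
  have hSS : ∀ x : H, S (S x) = x := fun x => by
    have := ContinuousLinearMap.ext_iff.mp hS2 x; simpa using this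
  have hCψ : C ψ = lam • S ψ := by
    rw [hU] at hψ
    have h1' : S (C ψ) = lam • ψ := hψ
    calc C ψ = S (S (C ψ)) := (hSS _).symm
      _ = S (lam • ψ) := by rw [h1']
      _ = lam • S ψ := map_smul S lam ψ
  have hkey : ((a:ℂ) - b) • (adjoint d (d ψ)) = lam • S ψ - (b:ℂ) • ψ := by
    rw [hC] at hCψ
    simp only [add_apply, smul_apply, comp_apply, sub_apply, ContinuousLinearMap.one_apply] at hCψ
    linear_combination (norm := module) hCψ
  have hSkey : ((a:ℂ) - b) • S (adjoint d (d ψ)) = lam • ψ - (b:ℂ) • S ψ := by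
    have h := congrArg S hkey
    simpa [map_smul, map_sub, hSS] using h
  have hc0 : lam ^ 2 - (b:ℂ) ^ 2 ≠ 0 := by
    intro h
    rcases mul_eq_zero.mp (show (lam - b) * (lam + b) = 0 by linear_combination h) with h' | h'
    · exact hlb (sub_eq_zero.mp h')
    · exact hlnb (eq_neg_of_add_eq_zero_left h')
  have hgoal1 : ((a:ℂ) - b) • ((b:ℂ) • (adjoint d (d ψ)) + lam • S (adjoint d (d ψ)))
      = (lam ^ 2 - (b:ℂ) ^ 2) • ψ := by
    calc ((a:ℂ) - b) • ((b:ℂ) • (adjoint d (d ψ)) + lam • S (adjoint d (d ψ)))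
        = (b:ℂ) • (((a:ℂ) - b) • (adjoint d (d ψ))) + lam • (((a:ℂ) - b) • S (adjoint d (d ψ))) := by
          module
      _ = (b:ℂ) • (lam • S ψ - (b:ℂ) • ψ) + lam • (lam • ψ - (b:ℂ) • S ψ) := by rw [hkey, hSkey]
      _ = (lam ^ 2 - (b:ℂ) ^ 2) • ψ := by module
  constructor
  · rw [div_eq_inv_mul, ← smul_smul, hgoal1, smul_smul, inv_mul_cancel₀ hc0, one_smul]
  · -- second part
    have hadj : adjoint T = T := by
      rw [hT]
      simp [adjoint_comp, adjoint_adjoint, hS.adjoint_eq, comp_assoc]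
    have hdS : lam • d (S ψ) = (a:ℂ) • d ψ := by
      have h := congrArg d hkey
      simp only [map_smul, map_sub, hdd] at h
      linear_combination (norm := module) -h
    have hTf' : T (d ψ) = d (S (adjoint d (d ψ))) := by rw [hT]; rfl
    have hTf : (lam * ((a:ℂ) - b)) • T (d ψ) = (lam ^ 2 - (a:ℂ) * b) • d ψ := by
      have h := congrArg d hSkey
      simp only [map_smul, map_sub] at h
      rw [hTf', mul_smul]
      calc lam • (((a:ℂ) - b) • d (S (adjoint d (d ψ))))
          = lam • (lam • d ψ - (b:ℂ) • d (S ψ)) := by rw [h]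
        _ = lam • lam • d ψ - (b:ℂ) • (lam • d (S ψ)) := by module
        _ = lam • lam • d ψ - (b:ℂ) • ((a:ℂ) • d ψ) := by rw [hdS]
        _ = (lam ^ 2 - (a:ℂ) * b) • d ψ := by module
    have hT2 : (lam * ((a:ℂ) - b)) ^ 2 • T (T (d ψ)) = (lam ^ 2 - (a:ℂ) * b) ^ 2 • d ψ := by
      have h := congrArg T hTf
      simp only [map_smul] at h
      calc (lam * ((a:ℂ) - b)) ^ 2 • T (T (d ψ))
          = (lam * ((a:ℂ) - b)) • ((lam * ((a:ℂ) - b)) • T (T (d ψ))) := by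
            rw [smul_smul, sq]
        _ = (lam * ((a:ℂ) - b)) • ((lam ^ 2 - (a:ℂ) * b) • T (d ψ)) := by rw [h]
        _ = (lam ^ 2 - (a:ℂ) * b) • ((lam * ((a:ℂ) - b)) • T (d ψ)) := smul_comm _ _ _
        _ = (lam ^ 2 - (a:ℂ) * b) • ((lam ^ 2 - (a:ℂ) * b) • d ψ) := by rw [hTf]
        _ = (lam ^ 2 - (a:ℂ) * b) ^ 2 • d ψ := by rw [smul_smul, ← sq]
    intro g hg
    have hce : (lam ^ 2 - (a:ℂ) * b) ^ 2 - (lam * ((a:ℂ) - b)) ^ 2 ≠ 0 := by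
      intro h
      have hfac : (lam - a) * (lam + b) * ((lam + a) * (lam - b)) = 0 := by linear_combination h
      rcases mul_eq_zero.mp hfac with h' | h'
      · rcases mul_eq_zero.mp h' with h'' | h''
        · exact hla (sub_eq_zero.mp h'')
        · exact hlnb (eq_neg_of_add_eq_zero_left h'')
      · rcases mul_eq_zero.mp h' with h'' | h''
        · exact hlna (eq_neg_of_add_eq_zero_left h'')
        · exact hlb (sub_eq_zero.mp h'')
    have hsa : ∀ (x : K) (y : K), (inner ℂ (T x) y : ℂ) = inner ℂ x (T y) := by
      intro x y
      conv_lhs => rw [← hadj]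
      exact ContinuousLinearMap.adjoint_inner_left T y x
    have h2 : (inner ℂ (T (T (d ψ))) g : ℂ) = inner ℂ (d ψ) g := by
      rw [hsa, hsa, hg]
    have h3' : (inner ℂ ((lam * ((a:ℂ) - b)) ^ 2 • T (T (d ψ))) g : ℂ)
        = inner ℂ ((lam ^ 2 - (a:ℂ) * b) ^ 2 • d ψ) g := by rw [hT2]
    rw [inner_smul_left, inner_smul_left, h2] at h3'
    have hz : ((starRingEnd ℂ) ((lam * ((a:ℂ) - b)) ^ 2) - (starRingEnd ℂ) ((lam ^ 2 - (a:ℂ) * b) ^ 2))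
        * (inner ℂ (d ψ) g : ℂ) = 0 := by linear_combination h3'
    rcases mul_eq_zero.mp hz with h' | h'
    · exfalso
      have h'' := (starRingEnd ℂ).injective (sub_eq_zero.mp h')
      exact hce (by linear_combination -h'')
    · exact h'
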